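/- Let Θ ∈ (0, 2π), α = e^{-iΘ}, and d ∈ (π/Θ)ℤ (so α^d ∈ ℝ, i.e. sin(dΘ) = 0). Then the real-linear map F : ℝ[T] → ℝ[T] sending P to the polynomial t ↦ Im(α^d · P(t - iΘ)) is surjective with kernel equal to the constant polynomials; in particular, for each Q ∈ ℝ[T] the solution set of F(P) = Q has the form {P₀ + c : c ∈ ℝ} for some P₀ with deg P₀ = deg Q + 1, and there is a unique solution vanishing at 0. -/
import Mathlib


open Polynomial
open Complex

noncomputable def imPoly (q : ℂ[X]) : ℝ[X] :=
  ∑ k ∈ q.support, Polynomial.C (q.coeff k).im * X ^ k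

lemma imPoly_coeff (q : ℂ[X]) (n : ℕ) : (imPoly q).coeff n = (q.coeff n).im := by
  rw [imPoly, finset_sum_coeff]
  simp only [coeff_C_mul, coeff_X_pow, mul_ite, mul_one, mul_zero]
  rw [Finset.sum_ite_eq q.support n (fun k => (q.coeff k).im)]
  split_ifs with h
  · rfl
  · rw [notMem_support_iff.1 h]; simp

lemma imPoly_eval (q : ℂ[X]) (t : ℝ) : (imPoly q).eval t = (q.eval (t : ℂ)).im := by
  rw [imPoly, eval_finset_sum, eval_eq_sum, Polynomial.sum_def, Complex.im_sum]
  apply Finset.sum_congr rfl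
  intro k _
  simp [Complex.mul_im, ← Complex.ofReal_pow]

noncomputable def Gop (ε Θ : ℝ) (P : ℝ[X]) : ℝ[X] :=
  Polynomial.C ε *
    imPoly ((P.map (algebraMap ℝ ℂ)).comp (X - Polynomial.C (Complex.I * (Θ : ℂ))))

lemma Gop_eval (ε Θ : ℝ) (P : ℝ[X]) (t : ℝ) :
    (Gop ε Θ P).eval t
      = ε * ((P.map (algebraMap ℝ ℂ)).eval ((t : ℂ) - Complex.I * (Θ : ℂ))).im := by
  rw [Gop, eval_mul, eval_C, imPoly_eval, eval_comp]
  simp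

lemma Gop_add (ε Θ : ℝ) (P Q : ℝ[X]) : Gop ε Θ (P + Q) = Gop ε Θ P + Gop ε Θ Q := by
  unfold Gop
  rw [Polynomial.map_add, add_comp, ← mul_add]
  congr 1
  ext n
  simp [imPoly_coeff]

lemma Gop_neg (ε Θ : ℝ) (P : ℝ[X]) : Gop ε Θ (-P) = -Gop ε Θ P := by
  unfold Gop
  rw [Polynomial.map_neg, neg_comp, ← mul_neg]
  congr 1
  ext n
  simp [imPoly_coeff]

lemma Gop_sub (ε Θ : ℝ) (P Q : ℝ[X]) : Gop ε Θ (P - Q) = Gop ε Θ P - Gop ε Θ Q := by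
  rw [sub_eq_add_neg, Gop_add, Gop_neg, sub_eq_add_neg]

lemma Gop_C (ε Θ c : ℝ) : Gop ε Θ (Polynomial.C c) = 0 := by
  unfold Gop
  rw [Polynomial.map_C, C_comp]
  convert mul_zero _
  ext n
  simp [imPoly_coeff, coeff_C]
  split_ifs <;> simp

lemma Gop_zero (ε Θ : ℝ) : Gop ε Θ 0 = 0 := by
  simpa using Gop_C ε Θ 0

-- coefficients of the comp, via taylor
lemma comp_coeff_ge (f : ℂ[X]) (a : ℂ) (k : ℕ) (hk : f.natDegree ≤ k) :
    (f.comp (X - Polynomial.C a)).coeff k = f.coeff k := by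
  have hc : f.comp (X - Polynomial.C a) = Polynomial.taylor (-a) f := by
    rw [taylor_apply, sub_eq_add_neg, ← C_neg]
  rcases eq_or_lt_of_le hk with h | h
  · -- k = natDegree : both leading coeffs
    subst h
    have hnd : (f.comp (X - Polynomial.C a)).natDegree = f.natDegree := by
      rw [hc, natDegree_taylor]
    calc (f.comp (X - Polynomial.C a)).coeff f.natDegree
        = (f.comp (X - Polynomial.C a)).leadingCoeff := by rw [leadingCoeff, hnd]
      _ = f.leadingCoeff * (X - Polynomial.C a).leadingCoeff ^ f.natDegree :=
          leadingCoeff_comp (by rw [natDegree_X_sub_C]; omega)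
      _ = f.coeff f.natDegree := by rw [leadingCoeff_X_sub_C, one_pow, mul_one, leadingCoeff]
  · rw [coeff_eq_zero_of_natDegree_lt h, coeff_eq_zero_of_natDegree_lt]
    rw [hc, natDegree_taylor]; exact h

lemma comp_coeff_sub_one (f : ℂ[X]) (a : ℂ) (h : 1 ≤ f.natDegree) :
    (f.comp (X - Polynomial.C a)).coeff (f.natDegree - 1)
      = f.coeff (f.natDegree - 1) + (f.natDegree : ℂ) * f.coeff f.natDegree * (-a) := by
  have hc : f.comp (X - Polynomial.C a) = Polynomial.taylor (-a) f := by
    rw [taylor_apply, sub_eq_add_neg, ← C_neg]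
  rw [hc, taylor_coeff]
  set n := f.natDegree with hn
  have hdeg : (Polynomial.hasseDeriv (n - 1) f).natDegree < 2 := by
    have := natDegree_hasseDeriv_le f (n - 1)
    omega
  rw [eval_eq_sum_range' hdeg]
  rw [Finset.sum_range_succ, Finset.sum_range_one]
  rw [hasseDeriv_coeff, hasseDeriv_coeff]
  have h1 : 0 + (n - 1) = n - 1 := by omega
  have h2 : 1 + (n - 1) = n := by omega
  have h3 : n.choose (n - 1) = n := by
    rw [Nat.choose_symm h, Nat.choose_one_right]
  rw [h1, h2, Nat.choose_self, h3]
  push_cast; ring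

lemma Gop_coeff_ge (ε Θ : ℝ) (P : ℝ[X]) (k : ℕ) (hk : P.natDegree ≤ k) :
    (Gop ε Θ P).coeff k = 0 := by
  have hnd : (P.map (algebraMap ℝ ℂ)).natDegree = P.natDegree :=
    natDegree_map_eq_of_injective (algebraMap ℝ ℂ).injective P
  rw [Gop, coeff_C_mul, imPoly_coeff, comp_coeff_ge _ _ _ (by rw [hnd]; exact hk),
    coeff_map]
  simp

lemma Gop_coeff_sub_one' (ε Θ : ℝ) (P : ℝ[X]) (h : 1 ≤ P.natDegree) :
    (Gop ε Θ P).coeff (P.natDegree - 1) = -(ε * Θ * P.natDegree * P.leadingCoeff) := by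
  have hnd : (P.map (algebraMap ℝ ℂ)).natDegree = P.natDegree :=
    natDegree_map_eq_of_injective (algebraMap ℝ ℂ).injective P
  rw [Gop, coeff_C_mul, imPoly_coeff]
  have := comp_coeff_sub_one (P.map (algebraMap ℝ ℂ)) (Complex.I * (Θ : ℂ))
    (by rw [hnd]; exact h)
  rw [hnd] at this
  rw [this, coeff_map, coeff_map]
  simp only [Complex.add_im]
  rw [leadingCoeff]
  have : ((P.natDegree : ℂ) * (algebraMap ℝ ℂ) (P.coeff P.natDegree) *
      -(Complex.I * (Θ : ℂ))).im = -((P.natDegree : ℝ) * P.coeff P.natDegree * Θ) := by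
    simp [Complex.mul_im, Complex.mul_re]
  rw [this]
  simp
  ring

lemma Gop_degree (ε Θ : ℝ) (hε : ε ≠ 0) (hΘ : Θ ≠ 0) (P : ℝ[X]) (h : 1 ≤ P.natDegree) :
    (Gop ε Θ P).degree = ((P.natDegree - 1 : ℕ) : WithBot ℕ) := by
  have hP : P ≠ 0 := fun h0 => by simp [h0] at h
  have hcoeff : (Gop ε Θ P).coeff (P.natDegree - 1) ≠ 0 := by
    rw [Gop_coeff_sub_one' ε Θ P h]
    refine neg_ne_zero.2 (mul_ne_zero (mul_ne_zero (mul_ne_zero hε hΘ) ?_) ?_)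
    · exact Nat.cast_ne_zero.2 (by omega)
    · exact leadingCoeff_ne_zero.2 hP
  refine le_antisymm ?_ (le_degree_of_ne_zero hcoeff)
  rw [degree_le_iff_coeff_zero]
  intro m hm
  have hm2 : P.natDegree - 1 < m := by exact_mod_cast hm
  exact Gop_coeff_ge ε Θ P m (by omega)

lemma Gop_natDegree (ε Θ : ℝ) (hε : ε ≠ 0) (hΘ : Θ ≠ 0) (P : ℝ[X]) (h : 1 ≤ P.natDegree) :
    (Gop ε Θ P).natDegree = P.natDegree - 1 :=
  natDegree_eq_of_degree_eq_some (Gop_degree ε Θ hε hΘ P h)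

lemma Gop_leadingCoeff (ε Θ : ℝ) (hε : ε ≠ 0) (hΘ : Θ ≠ 0) (P : ℝ[X]) (h : 1 ≤ P.natDegree) :
    (Gop ε Θ P).leadingCoeff = -(ε * Θ * P.natDegree * P.leadingCoeff) := by
  rw [leadingCoeff, Gop_natDegree ε Θ hε hΘ P h, Gop_coeff_sub_one' ε Θ P h]

lemma Gop_eq_zero_iff (ε Θ : ℝ) (hε : ε ≠ 0) (hΘ : Θ ≠ 0) (P : ℝ[X]) :
    Gop ε Θ P = 0 ↔ ∃ c, P = Polynomial.C c := by
  constructor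
  · intro h0
    rcases Nat.eq_zero_or_pos P.natDegree with h | h
    · obtain ⟨c, hc⟩ := Polynomial.natDegree_eq_zero.1 h
      exact ⟨c, hc.symm⟩
    · exfalso
      have := Gop_degree ε Θ hε hΘ P h
      rw [h0, degree_zero] at this
      exact absurd this.symm (by simp)
  · rintro ⟨c, rfl⟩; exact Gop_C ε Θ c

lemma Gop_surj (ε Θ : ℝ) (hε : ε ≠ 0) (hΘ : Θ ≠ 0) (Q : ℝ[X]) :
    ∃ P : ℝ[X], Gop ε Θ P = Q ∧ P.degree = Q.degree + 1 := by
  suffices H : ∀ n : ℕ, ∀ Q : ℝ[X], Q.natDegree ≤ n →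
      ∃ P : ℝ[X], Gop ε Θ P = Q ∧ P.degree = Q.degree + 1 from H Q.natDegree Q le_rfl
  intro n
  induction n using Nat.strong_induction_on with
  | _ n ih =>
  intro Q hQn
  by_cases hQ : Q = 0
  · exact ⟨0, by simp [Gop_zero, hQ], by simp [hQ]⟩
  set m := Q.natDegree with hm
  have hdQ : Q.degree = (m : ℕ) := degree_eq_natDegree hQ
  set c := Q.leadingCoeff / (-(ε * Θ * (m + 1))) with hc
  have hden : (-(ε * Θ * ((m : ℝ) + 1))) ≠ 0 := by
    refine neg_ne_zero.2 (mul_ne_zero (mul_ne_zero hε hΘ) ?_)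
    positivity
  have hc0 : c ≠ 0 := div_ne_zero (leadingCoeff_ne_zero.2 hQ) hden
  set P₁ : ℝ[X] := Polynomial.C c * X ^ (m + 1) with hP₁
  have hP₁nd : P₁.natDegree = m + 1 := natDegree_C_mul_X_pow (m + 1) c hc0
  have hP₁d : P₁.degree = ((m + 1 : ℕ) : WithBot ℕ) := by
    rw [hP₁]; exact degree_C_mul_X_pow (m + 1) hc0
  have hP₁lead : P₁.leadingCoeff = c := by
    rw [leadingCoeff, hP₁nd, hP₁, coeff_C_mul, coeff_X_pow]; simp
  have h1 : 1 ≤ P₁.natDegree := by omega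
  have hGdeg : (Gop ε Θ P₁).degree = (m : ℕ) := by
    rw [Gop_degree ε Θ hε hΘ P₁ h1, hP₁nd]; norm_num
  have hGlead : Q.leadingCoeff = (Gop ε Θ P₁).leadingCoeff := by
    rw [Gop_leadingCoeff ε Θ hε hΘ P₁ h1, hP₁nd, hP₁lead, hc]
    push_cast
    field_simp
  by_cases hQ' : Q - Gop ε Θ P₁ = 0
  · refine ⟨P₁, (sub_eq_zero.1 hQ').symm, ?_⟩
    rw [hP₁d, hdQ]
    push_cast
    rfl
  · have hdlt : (Q - Gop ε Θ P₁).degree < Q.degree :=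
      degree_sub_lt (by rw [hGdeg, hdQ]) hQ hGlead
    have hndlt : (Q - Gop ε Θ P₁).natDegree < m := natDegree_lt_natDegree hQ' hdlt
    obtain ⟨P₂, hP₂, hP₂d⟩ := ih (Q - Gop ε Θ P₁).natDegree (by omega) _ le_rfl
    set k := (Q - Gop ε Θ P₁).natDegree with hk
    have hdQ' : (Q - Gop ε Θ P₁).degree = (k : ℕ) := degree_eq_natDegree hQ'
    have hP₂deg : P₂.degree = ((k + 1 : ℕ) : WithBot ℕ) := by
      rw [hP₂d, hdQ']; push_cast; rfl
    have hdlt2 : P₂.degree < P₁.degree := by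
      rw [hP₂deg, hP₁d]
      exact_mod_cast by omega
    refine ⟨P₁ + P₂, ?_, ?_⟩
    · rw [Gop_add, hP₂]; ring
    · rw [add_comm, degree_add_eq_right_of_degree_lt hdlt2, hP₁d, hdQ]
      push_cast
      rfl


/-- Lemma 2.2 (case 2): for `d ∈ (π/Θ)ℤ` (i.e. `α^d ∈ ℝ`), the map
`F : P ↦ (t ↦ Im(α^d · P(t - iΘ)))` on real polynomials is surjective with
kernel the constants; the solution set of `F(P) = Q` is `{P₀ + c : c ∈ ℝ}` with
`deg P₀ = deg Q + 1`, and there is a unique solution vanishing at `0`. -/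
theorem stmt1 (Θ d : ℝ) (hΘ : 0 < Θ) (hΘ2 : Θ < 2 * Real.pi)
    (hd : ∃ n : ℤ, d * Θ = Real.pi * n) :
    (∀ P : Polynomial ℝ,
      (∀ t : ℝ,
        (Complex.exp (-(Complex.I * (d : ℂ) * (Θ : ℂ))) *
          (P.map (algebraMap ℝ ℂ)).eval ((t : ℂ) - Complex.I * (Θ : ℂ))).im = 0)
      ↔ ∃ c : ℝ, P = Polynomial.C c) ∧
    (∀ Q : Polynomial ℝ,
      (∃ P₀ : Polynomial ℝ, P₀.degree = Q.degree + 1 ∧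
        ∀ P : Polynomial ℝ,
          ((∀ t : ℝ,
            (Complex.exp (-(Complex.I * (d : ℂ) * (Θ : ℂ))) *
              (P.map (algebraMap ℝ ℂ)).eval ((t : ℂ) - Complex.I * (Θ : ℂ))).im = Q.eval t)
           ↔ ∃ c : ℝ, P = P₀ + Polynomial.C c)) ∧
      (∃! P : Polynomial ℝ, P.eval 0 = 0 ∧
        ∀ t : ℝ,
          (Complex.exp (-(Complex.I * (d : ℂ) * (Θ : ℂ))) *
            (P.map (algebraMap ℝ ℂ)).eval ((t : ℂ) - Complex.I * (Θ : ℂ))).im = Q.eval t)) := by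
  obtain ⟨n, hn⟩ := hd
  set ε := Real.cos (d * Θ) with hε_def
  have hsin : Real.sin (d * Θ) = 0 := by
    rw [hn, mul_comm]; exact Real.sin_int_mul_pi n
  have hε : ε ≠ 0 := by
    have h1 := Real.sin_sq_add_cos_sq (d * Θ)
    intro h0
    rw [hsin, ← hε_def, h0] at h1
    norm_num at h1
  have hΘ0 : Θ ≠ 0 := ne_of_gt hΘ
  have hexp : Complex.exp (-(Complex.I * (d : ℂ) * (Θ : ℂ))) = (ε : ℂ) := by
    have harg : -(Complex.I * (d : ℂ) * (Θ : ℂ)) = ((-(d * Θ) : ℝ) : ℂ) * Complex.I := by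
      push_cast; ring
    rw [harg, Complex.exp_mul_I, ← Complex.ofReal_cos, ← Complex.ofReal_sin,
      Real.cos_neg, Real.sin_neg, hsin]
    rw [neg_zero, Complex.ofReal_zero, zero_mul, add_zero]
  have hF : ∀ (P : ℝ[X]) (t : ℝ),
      (Complex.exp (-(Complex.I * (d : ℂ) * (Θ : ℂ))) *
        (P.map (algebraMap ℝ ℂ)).eval ((t : ℂ) - Complex.I * (Θ : ℂ))).im
      = (Gop ε Θ P).eval t := by
    intro P t
    rw [hexp, Gop_eval]
    simp [Complex.mul_im]
  constructor
  · intro P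
    constructor
    · intro h
      refine (Gop_eq_zero_iff ε Θ hε hΘ0 P).1 (Polynomial.funext fun t => ?_)
      rw [← hF P t, h t, eval_zero]
    · rintro ⟨c, rfl⟩ t
      rw [hF, Gop_C, eval_zero]
  · intro Q
    obtain ⟨P₀, hP₀, hP₀deg⟩ := Gop_surj ε Θ hε hΘ0 Q
    have hchar : ∀ P : ℝ[X],
        (∀ t : ℝ,
          (Complex.exp (-(Complex.I * (d : ℂ) * (Θ : ℂ))) *
            (P.map (algebraMap ℝ ℂ)).eval ((t : ℂ) - Complex.I * (Θ : ℂ))).im = Q.eval t)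
        ↔ ∃ c : ℝ, P = P₀ + Polynomial.C c := by
      intro P
      constructor
      · intro h
        have hGP : Gop ε Θ P = Q := Polynomial.funext fun t => by rw [← hF P t, h t]
        have : Gop ε Θ (P - P₀) = 0 := by rw [Gop_sub, hGP, hP₀, sub_self]
        obtain ⟨c, hc⟩ := (Gop_eq_zero_iff ε Θ hε hΘ0 _).1 this
        exact ⟨c, by rw [← hc]; ring⟩
      · rintro ⟨c, rfl⟩ t
        rw [hF, Gop_add, Gop_C, add_zero, hP₀]
    refine ⟨⟨P₀, hP₀deg, hchar⟩, ?_⟩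
    refine ⟨P₀ - Polynomial.C (P₀.eval 0), ⟨by simp, ?_⟩, ?_⟩
    · exact (hchar _).2 ⟨-(P₀.eval 0), by rw [map_neg]; ring⟩
    · rintro P ⟨h0, hPt⟩
      obtain ⟨c, rfl⟩ := (hchar P).1 hPt
      have hc : P₀.eval 0 + c = 0 := by simpa using h0
      have : c = -(P₀.eval 0) := by linarith
      rw [this, map_neg]; ring
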